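/- Combinatorial core of Theorem 4.6: Let A and B be finite σ-structures with a homomorphism from A to B, let k, L ≥ 1, ρ_1, …, ρ_L : B → [k] × [k], G a finite simple graph, and X = X(B, (ρ_i)_{i=1}^L, G, k) the structure from the main construction. Suppose that for every homomorphism g : A → B there exist a finite σ-structure C, a homomorphism h : C → A, and l ∈ [L] such that ρ_l ∘ g ∘ h is a grid-like mapping from C onto [k] × [k]. Then G contains a clique of size k if and only if there exists a homomorphism from A to X. -/

import Mathlib

/-- A relational structure over signature `σ` with arities `ar` and universe `A`. -/
structure RelStruct (σ : Type) (ar : σ → ℕ) (A : Type) where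
  rel : ∀ R : σ, Set (Fin (ar R) → A)

/-- `f` is a homomorphism of relational structures from `SA` to `SB`. -/
def IsHom {σ : Type} {ar : σ → ℕ} {A B : Type}
    (SA : RelStruct σ ar A) (SB : RelStruct σ ar B) (f : A → B) : Prop :=
  ∀ (R : σ) (t : Fin (ar R) → A), t ∈ SA.rel R → (fun j => f (t j)) ∈ SB.rel R

/-- The Gaifman (primal) graph of a relational structure. -/
def Gaifman {σ : Type} {ar : σ → ℕ} {A : Type} (SA : RelStruct σ ar A) : SimpleGraph A where
  Adj a b := a ≠ b ∧ ∃ (R : σ) (t : Fin (ar R) → A),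
      t ∈ SA.rel R ∧ a ∈ Set.range t ∧ b ∈ Set.range t
  symm := by
    constructor
    rintro a b ⟨hab, R, t, ht, ha, hb⟩
    exact ⟨hab.symm, R, t, ht, hb, ha⟩
  loopless := by
    constructor
    rintro a ⟨ha, -⟩
    exact ha rfl

/-- `ρ` is a grid-like mapping from the vertex set of the graph `G` onto `[k] × [k]`:
it is surjective and all the preimages of its two components are connected in `G`. -/
def GridLikeOn {C : Type} (G : SimpleGraph C) (k : ℕ) (ρ : C → Fin k × Fin k) : Prop :=
  Function.Surjective ρ ∧ ∀ i : Fin k,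
    (G.induce {c | (ρ c).1 = i}).Connected ∧
    (G.induce {c | (ρ c).2 = i}).Connected

/-- `ρ` is a grid-like mapping from the structure `SC` onto `[k] × [k]`. -/
def GridLike {σ : Type} {ar : σ → ℕ} {C : Type}
    (SC : RelStruct σ ar C) (k : ℕ) (ρ : C → Fin k × Fin k) : Prop :=
  GridLikeOn (Gaifman SC) k ρ

/-- `G` contains a clique of size `k`. -/
def HasNClique {V : Type} (G : SimpleGraph V) (k : ℕ) : Prop :=
  ∃ s : Finset V, G.IsNClique k s

/-- The condition defining the universe of the structure `X` of the main construction. -/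
def XOk {B V : Type} (k L : ℕ) (ρ : Fin L → B → Fin k × Fin k) (G : SimpleGraph V)
    (x : B × (Fin L → V × V)) : Prop :=
  ∀ i : Fin L,
    ((ρ i x.1).1 = (ρ i x.1).2 → (x.2 i).1 = (x.2 i).2) ∧
    ((ρ i x.1).1 ≠ (ρ i x.1).2 → G.Adj (x.2 i).1 (x.2 i).2)

/-- The structure `X = X(B, (ρ_i)_{i=1}^L, G, k)` of the main construction. -/
def XStruct {σ : Type} {ar : σ → ℕ} {B V : Type} (SB : RelStruct σ ar B) (k L : ℕ)
    (ρ : Fin L → B → Fin k × Fin k) (G : SimpleGraph V) :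
    RelStruct σ ar {x : B × (Fin L → V × V) // XOk k L ρ G x} where
  rel R := {t |
    (fun j => (t j).1.1) ∈ SB.rel R ∧
    ∀ (j j' : Fin (ar R)) (i : Fin L),
      ((ρ i (t j).1.1).1 = (ρ i (t j').1.1).1 → ((t j).1.2 i).1 = ((t j').1.2 i).1) ∧
      ((ρ i (t j).1.1).2 = (ρ i (t j').1.1).2 → ((t j).1.2 i).2 = ((t j').1.2 i).2)}

/-- A function constant along edges of `G` within a connected induced set is constant there. -/
lemma const_on_connected {C V : Type} (G : SimpleGraph C) (S : Set C)
    (hconn : (G.induce S).Connected) (u : C → V)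
    (hadj : ∀ c c' : C, c ∈ S → c' ∈ S → G.Adj c c' → u c = u c') :
    ∀ c ∈ S, ∀ c' ∈ S, u c = u c' := by
  have key : ∀ (x y : S) (w : (G.induce S).Walk x y), u x = u y := by
    intro x y w
    induction w with
    | nil => rfl
    | cons hxy p ih => exact (hadj _ _ (by exact Subtype.mem _) (by exact Subtype.mem _) hxy).trans ih
  intro c hc c' hc'
  obtain ⟨w⟩ := hconn ⟨c, hc⟩ ⟨c', hc'⟩
  exact key _ _ w

/-- Combinatorial core of Theorem 4.6. Under condition (*), `G` contains a
clique of size `k` iff there is a homomorphism from `A` to `X = X(B, (ρ_i)_{i=1}^L, G, k)`. -/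
theorem main_reduction_correct
    {σ : Type} {ar : σ → ℕ} {A B V : Type}
    [Finite σ] [Finite A] [Finite B] [Finite V]
    (SA : RelStruct σ ar A) (SB : RelStruct σ ar B)
    (hAB : ∃ f : A → B, IsHom SA SB f)
    (k L : ℕ) (hk : 1 ≤ k) (hL : 1 ≤ L)
    (ρ : Fin L → B → Fin k × Fin k) (G : SimpleGraph V)
    (hstar : ∀ g : A → B, IsHom SA SB g →
      ∃ (C : Type) (SC : RelStruct σ ar C) (h : C → A),
        Finite C ∧ IsHom SC SA h ∧
          ∃ l : Fin L, GridLike SC k (fun c => ρ l (g (h c)))) :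
    (HasNClique G k ↔
      ∃ f : A → {x : B × (Fin L → V × V) // XOk k L ρ G x},
        IsHom SA (XStruct SB k L ρ G) f) := by
  classical
  constructor
  · rintro ⟨s, hs⟩
    obtain ⟨f, hf⟩ := hAB
    have hcard : s.card = k := hs.card_eq
    have e : Fin k ≃ {x // x ∈ s} := (s.equivFin.trans (finCongr hcard)).symm
    set φ : Fin k → V := fun i => (e i : V) with hφ
    have hφinj : Function.Injective φ := fun i j hij => e.injective (Subtype.ext hij)
    have hφadj : ∀ i j, i ≠ j → G.Adj (φ i) (φ j) := by
      intro i j hij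
      refine hs.isClique (e i).2 (e j).2 ?_
      intro hh
      exact hij (e.injective (Subtype.ext hh))
    refine ⟨fun a => ⟨(f a, fun i => (φ (ρ i (f a)).1, φ (ρ i (f a)).2)), ?_⟩, ?_⟩
    · intro i
      refine ⟨fun hh => congrArg φ hh, fun hh => hφadj _ _ hh⟩
    · intro R t ht
      refine ⟨hf R t ht, ?_⟩
      intro j j' i
      exact ⟨fun hh => congrArg φ hh, fun hh => congrArg φ hh⟩
  · rintro ⟨F, hF⟩
    set g : A → B := fun a => (F a).1.1 with hg
    have hgHom : IsHom SA SB g := fun R t ht => (hF R t ht).1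
    obtain ⟨C, SC, h, hCfin, hhHom, l, hgrid⟩ := hstar g hgHom
    set σρ : C → Fin k × Fin k := fun c => ρ l (g (h c)) with hσρ
    obtain ⟨hsurj, hconn⟩ := hgrid
    set u : C → V := fun c => ((F (h c)).1.2 l).1 with hu
    set v : C → V := fun c => ((F (h c)).1.2 l).2 with hv
    have hedge : ∀ c c' : C, (Gaifman SC).Adj c c' →
        ((σρ c).1 = (σρ c').1 → u c = u c') ∧ ((σρ c).2 = (σρ c').2 → v c = v c') := by
      intro c c' hadj
      obtain ⟨hne, R, t, ht, ⟨j, hj⟩, ⟨j', hj'⟩⟩ := hadj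
      have h1 : (fun i => h (t i)) ∈ SA.rel R := hhHom R t ht
      have h2 := (hF R (fun i => h (t i)) h1).2 j j' l
      subst hj hj'
      exact h2
    have hrowconst : ∀ i : Fin k, ∀ c, (σρ c).1 = i → ∀ c', (σρ c').1 = i → u c = u c' := by
      intro i c hc c' hc'
      exact const_on_connected (Gaifman SC) {c | (σρ c).1 = i} (hconn i).1 u
        (fun a b ha hb hab => (hedge a b hab).1 (ha.trans hb.symm)) c hc c' hc'
    have hcolconst : ∀ i : Fin k, ∀ c, (σρ c).2 = i → ∀ c', (σρ c').2 = i → v c = v c' := by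
      intro i c hc c' hc'
      exact const_on_connected (Gaifman SC) {c | (σρ c).2 = i} (hconn i).2 v
        (fun a b ha hb hab => (hedge a b hab).2 (ha.trans hb.symm)) c hc c' hc'
    have cpair : ∀ i j : Fin k, ∃ c : C, σρ c = (i, j) := fun i j => hsurj (i, j)
    choose cp hcp using cpair
    set U : Fin k → V := fun i => u (cp i i) with hU
    set W : Fin k → V := fun j => v (cp j j) with hW
    have huU : ∀ c, u c = U ((σρ c).1) := by
      intro c
      exact hrowconst ((σρ c).1) c rfl (cp ((σρ c).1) ((σρ c).1))
        (by rw [hcp])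
    have hvW : ∀ c, v c = W ((σρ c).2) := by
      intro c
      exact hcolconst ((σρ c).2) c rfl (cp ((σρ c).2) ((σρ c).2))
        (by rw [hcp])
    have hUW : ∀ i, U i = W i := by
      intro i
      have hx := ((F (h (cp i i))).2 l).1
      have hσ : σρ (cp i i) = (i, i) := hcp i i
      have : u (cp i i) = v (cp i i) := by
        apply hx
        show (σρ (cp i i)).1 = (σρ (cp i i)).2
        rw [hσ]
      exact this
    have hadjU : ∀ i j : Fin k, i ≠ j → G.Adj (U i) (U j) := by
      intro i j hij
      have hx := ((F (h (cp i j))).2 l).2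
      have hσ : σρ (cp i j) = (i, j) := hcp i j
      have hne : (σρ (cp i j)).1 ≠ (σρ (cp i j)).2 := by
        rw [hσ]; exact hij
      have hadj : G.Adj (u (cp i j)) (v (cp i j)) := hx hne
      have h1 : u (cp i j) = U i := by rw [huU (cp i j), hσ]
      have h2 : v (cp i j) = W j := by rw [hvW (cp i j), hσ]
      rw [h1, h2, ← hUW j] at hadj
      exact hadj
    have hUinj : Function.Injective U := by
      intro i j hij
      by_contra hne
      exact (hadjU i j hne).ne hij
    refine ⟨Finset.univ.image U, ?_, ?_⟩
    · intro a ha b hb hab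
      simp only [Finset.coe_image, Finset.coe_univ, Set.image_univ, Set.mem_range] at ha hb
      obtain ⟨i, rfl⟩ := ha
      obtain ⟨j, rfl⟩ := hb
      exact hadjU i j (fun hh => hab (congrArg U hh))
    · rw [Finset.card_image_of_injective _ hUinj, Finset.card_univ, Fintype.card_fin]
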